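/- If α > 1 and β − 1 ≤ α ≤ β, then the digit system (A, 𝒟) has the finiteness property: for every x ∈ ℤ²[A] there exists k ∈ ℕ with Φ^k(x) = 0. Equivalently, the set of periodic points of Φ (i.e., the attractor 𝒜_Φ) equals {0}. -/

import Mathlib

open Matrix Polynomial

noncomputable section

/-- `ℤ²[A]`: the smallest `A`-invariant `ℤ`-module containing `ℤ²`. -/
def intSpan {n : ℕ} (A : Matrix (Fin n) (Fin n) ℚ) : Set (Fin n → ℚ) :=
  {x | ∃ (k : ℕ) (v : ℕ → Fin n → ℤ),
    x = ∑ j ∈ Finset.range (k + 1), (A ^ j).mulVec (fun i => ((v j i : ℚ)))}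

/-- The digit vector `(ν, 0)ᵀ`. -/
def digitVec (ν : ℤ) : Fin 2 → ℚ := ![(ν : ℚ), 0]

namespace S16

def castv (w : Fin 2 → ℤ) : Fin 2 → ℚ := fun i => (w i : ℚ)

def E1 : Fin 2 → ℚ := ![1, 0]

lemma castv_pair (u v : ℤ) : castv ![u, v] = ![(u:ℚ), (v:ℚ)] := by
  funext i; fin_cases i <;> simp [castv]

lemma castv_eq (w : Fin 2 → ℤ) : (fun i => ((w i : ℤ) : ℚ)) = castv w := rfl

lemma castv_add (w w' : Fin 2 → ℤ) : castv (w + w') = castv w + castv w' := by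
  funext i; simp [castv]

lemma mulVec_explicit (α β : ℚ) (A : Matrix (Fin 2) (Fin 2) ℚ) (hA : A = !![0, -β; 1, -α])
    (u v : ℚ) : A.mulVec ![u, v] = ![-β * v, u - α * v] := by
  subst hA
  funext i; fin_cases i <;> simp [Matrix.mulVec, dotProduct, Fin.sum_univ_two] <;> ring

lemma mulVec_eq_zero (α β : ℚ) (hβ : β ≠ 0) (A : Matrix (Fin 2) (Fin 2) ℚ)
    (hA : A = !![0, -β; 1, -α]) (x : Fin 2 → ℚ) (h : A.mulVec x = 0) : x = 0 := by
  subst hA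
  have h0 := congrFun h 0
  have h1 := congrFun h 1
  simp [Matrix.mulVec, dotProduct, Fin.sum_univ_two] at h0 h1
  have hx1 : x 1 = 0 := by
    rcases h0 with h0 | h0
    · exact absurd h0 hβ
    · exact h0
  funext i; fin_cases i
  · simpa [hx1, Matrix.vecHead, Matrix.vecTail] using h1
  · simpa using hx1


variable (A : Matrix (Fin 2) (Fin 2) ℚ)

def vecRep (g : Polynomial ℤ) : Fin 2 → ℚ :=
  (aeval A (g.map (Int.castRingHom ℚ))).mulVec E1

lemma vecRep_add (g₁ g₂ : Polynomial ℤ) :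
    vecRep A (g₁ + g₂) = vecRep A g₁ + vecRep A g₂ := by
  simp [vecRep, Polynomial.map_add, map_add, Matrix.add_mulVec]

lemma vecRep_sub (g₁ g₂ : Polynomial ℤ) :
    vecRep A (g₁ - g₂) = vecRep A g₁ - vecRep A g₂ := by
  simp [vecRep, Polynomial.map_sub, map_sub, Matrix.sub_mulVec]

lemma vecRep_Xmul (g : Polynomial ℤ) :
    vecRep A (X * g) = A.mulVec (vecRep A g) := by
  simp only [vecRep, Polynomial.map_mul, Polynomial.map_X, _root_.map_mul, aeval_X, Matrix.mulVec_mulVec]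

lemma vecRep_C (n : ℤ) : vecRep A (C n) = castv ![n, 0] := by
  have h1 : (C n : Polynomial ℤ).map (Int.castRingHom ℚ) = C ((n:ℚ)) := by simp
  unfold vecRep
  rw [h1, aeval_C, Algebra.algebraMap_eq_smul_one, Matrix.smul_mulVec,
    Matrix.one_mulVec, castv_pair]
  funext i; fin_cases i <;> simp [E1]

lemma vecRep_pair (α β : ℚ) (hA : A = !![0, -β; 1, -α]) (u v : ℤ) :
    vecRep A (C u + C v * X) = castv ![u, v] := by
  have h1 : (X * C v : Polynomial ℤ) = C v * X := by ring
  rw [vecRep_add, vecRep_C, ← h1, vecRep_Xmul, vecRep_C]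
  rw [castv_pair, castv_pair, castv_pair]
  subst hA
  funext i
  fin_cases i <;> simp [Matrix.mulVec, dotProduct, Fin.sum_univ_two]

lemma shift_sum (k : ℕ) (v : ℕ → Fin 2 → ℤ) :
    ∑ j ∈ Finset.range (k + 2), (A ^ j).mulVec (fun i => ((v j i : ℚ)))
      = castv (v 0) + A.mulVec (∑ j ∈ Finset.range (k + 1),
          (A ^ j).mulVec (fun i => ((v (j+1) i : ℚ)))) := by
  have h2 : (∑ j ∈ Finset.range (k+1), (A ^ (j+1)).mulVec (fun i => ((v (j+1) i : ℚ))))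
      = A.mulVec (∑ j ∈ Finset.range (k+1), (A ^ j).mulVec (fun i => ((v (j+1) i : ℚ)))) := by
    rw [← Matrix.mulVecLin_apply, map_sum]
    apply Finset.sum_congr rfl
    intro j _
    rw [Matrix.mulVecLin_apply, Matrix.mulVec_mulVec, ← pow_succ']
  rw [Finset.sum_range_succ' (fun j => (A ^ j).mulVec (fun i => ((v j i : ℚ)))) (k+1)]
  rw [h2, pow_zero, Matrix.one_mulVec, add_comm, castv_eq]

lemma rep_of_mem' : ∀ (k : ℕ) (v : ℕ → Fin 2 → ℤ) (α β : ℚ) (hA : A = !![0, -β; 1, -α]),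
    ∃ g : Polynomial ℤ,
      ∑ j ∈ Finset.range (k + 1), (A ^ j).mulVec (fun i => ((v j i : ℚ))) = vecRep A g := by
  intro k
  induction k with
  | zero =>
    intro v α β hA
    refine ⟨C (v 0 0) + C (v 0 1) * X, ?_⟩
    rw [Finset.sum_range_one, vecRep_pair A α β hA, pow_zero, Matrix.one_mulVec]
    funext i; fin_cases i <;> simp [castv]
  | succ k ih =>
    intro v α β hA
    obtain ⟨g', hg'⟩ := ih (fun j => v (j+1)) α β hA
    refine ⟨(C (v 0 0) + C (v 0 1) * X) + X * g', ?_⟩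
    rw [shift_sum, hg', vecRep_add, vecRep_Xmul, vecRep_pair A α β hA]
    congr 1
    funext i; fin_cases i <;> simp [castv]

lemma rep_of_mem {x : Fin 2 → ℚ} (hx : x ∈ intSpan A) (α β : ℚ) (hA : A = !![0, -β; 1, -α]) :
    ∃ g : Polynomial ℤ, x = vecRep A g := by
  obtain ⟨k, v, hv⟩ := hx
  obtain ⟨g, hg⟩ := rep_of_mem' A k v α β hA
  exact ⟨g, hv.trans hg⟩

lemma mem_zero : (0 : Fin 2 → ℚ) ∈ intSpan A := by
  refine ⟨0, fun _ _ => 0, ?_⟩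
  simp
  funext i; fin_cases i <;> rfl

lemma mem_assemble {y : Fin 2 → ℚ} (hy : y ∈ intSpan A) (w : Fin 2 → ℤ) :
    castv w + A.mulVec y ∈ intSpan A := by
  obtain ⟨k, v, hv⟩ := hy
  refine ⟨k + 1, fun j => Nat.casesOn j w v, ?_⟩
  rw [shift_sum]
  simp only [hv]
  rfl

lemma mem_intvec (w : Fin 2 → ℤ) : castv w ∈ intSpan A := by
  have := mem_assemble A (mem_zero A) w
  simpa using this

lemma mem_Amul {x : Fin 2 → ℚ} (hx : x ∈ intSpan A) : A.mulVec x ∈ intSpan A := by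
  have := mem_assemble A hx 0
  have h0 : castv 0 = 0 := by funext i; simp [castv]
  rwa [h0, zero_add] at this

lemma mem_addInt {x : Fin 2 → ℚ} (hx : x ∈ intSpan A) (w : Fin 2 → ℤ) :
    x + castv w ∈ intSpan A := by
  obtain ⟨k, v, hv⟩ := hx
  rcases k with _ | k
  · refine ⟨0, fun j => v j + w, ?_⟩
    rw [Finset.sum_range_one] at hv ⊢
    rw [hv, pow_zero, Matrix.one_mulVec, Matrix.one_mulVec, castv_eq, castv_eq, castv_add]
  · refine ⟨k + 1, fun j => Nat.casesOn j (v 0 + w) (fun n => v (n+1)), ?_⟩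
    rw [shift_sum] at hv ⊢
    rw [hv]
    show castv (v 0) + A.mulVec (∑ j ∈ Finset.range (k + 1),
        (A ^ j).mulVec fun i => ((v (j + 1) i : ℚ))) + castv w
      = castv (v 0 + w) + A.mulVec (∑ j ∈ Finset.range (k + 1),
        (A ^ j).mulVec fun i => ((v (j + 1) i : ℚ)))
    rw [castv_add]
    abel


variable (α β : ℚ)

def pQ : ℚ[X] := X ^ 2 + C α * X + C β

lemma pQ_monic : (pQ α β).Monic := by
  have : degree (C α * X + C β) < 2 := lt_of_le_of_lt degree_linear_le (by norm_num)
  have := monic_X_pow_add (n := 2) this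
  simpa [pQ, add_assoc] using this

lemma pQ_natDegree : (pQ α β).natDegree = 2 := by
  unfold pQ; compute_degree!

lemma pQ_degree : (pQ α β).degree = 2 := by
  have h := Polynomial.degree_eq_natDegree (pQ_monic α β).ne_zero
  rw [h, pQ_natDegree]; rfl

lemma aeval_pQ (A : Matrix (Fin 2) (Fin 2) ℚ) (hA : A = !![0, -β; 1, -α]) :
    aeval A (pQ α β) = 0 := by
  subst hA
  have h2 : (!![0, -β; 1, -α] : Matrix (Fin 2) (Fin 2) ℚ) ^ 2 =
      !![-β, β * α; -α, -β + α * α] := by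
    rw [sq]
    ext i j
    fin_cases i <;> fin_cases j <;>
      simp [Matrix.mul_apply, Fin.sum_univ_two] <;> ring
  simp only [pQ, map_add, _root_.map_mul, aeval_X_pow, aeval_C, aeval_X, h2,
    ← Algebra.smul_def, Algebra.algebraMap_eq_smul_one]
  ext i j
  fin_cases i <;> fin_cases j <;>
    simp [Matrix.smul_apply, Matrix.one_apply] <;> ring

lemma aeval_E1_zero (A : Matrix (Fin 2) (Fin 2) ℚ) (hA : A = !![0, -β; 1, -α])
    (w : ℚ[X]) (hw : (aeval A w).mulVec E1 = 0) : pQ α β ∣ w := by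
  have hm := pQ_monic α β
  rw [← modByMonic_eq_zero_iff_dvd hm]
  set r := w %ₘ pQ α β with hr
  have hdeg : degree r < 2 := by
    have := degree_modByMonic_lt w hm
    rwa [pQ_degree] at this
  have hdeg1 : degree r ≤ 1 := by
    rcases eq_or_ne r 0 with h | h
    · simp [h]
    · rw [Polynomial.degree_eq_natDegree h] at hdeg ⊢
      exact_mod_cast Nat.lt_succ_iff.mp (by exact_mod_cast hdeg)
  have hrw : r = C (r.coeff 1) * X + C (r.coeff 0) := eq_X_add_C_of_degree_le_one hdeg1
  -- evaluate r at A on E1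
  have hE : (aeval A r).mulVec E1 = 0 := by
    have hdiv : w %ₘ pQ α β + pQ α β * (w /ₘ pQ α β) = w := modByMonic_add_div w (pQ α β)
    have : aeval A w = aeval A r + aeval A (pQ α β) * aeval A (w /ₘ pQ α β) := by
      rw [← _root_.map_mul, ← map_add, hr, hdiv]
    rw [this, aeval_pQ α β A hA, zero_mul, add_zero] at hw
    exact hw
  have hAE1 : A.mulVec E1 = ![0, 1] := by
    subst hA
    funext i; fin_cases i <;> simp [Matrix.mulVec, dotProduct, Fin.sum_univ_two, E1]
  have e : aeval A r = r.coeff 1 • A + r.coeff 0 • (1 : Matrix (Fin 2) (Fin 2) ℚ) := by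
    conv_lhs => rw [hrw]
    simp only [map_add, _root_.map_mul, aeval_X, aeval_C]
    rw [← Algebra.smul_def, Algebra.algebraMap_eq_smul_one]
  have hcomp : (aeval A r).mulVec E1 = ![r.coeff 0, r.coeff 1] := by
    rw [e, Matrix.add_mulVec, Matrix.smul_mulVec, Matrix.smul_mulVec, hAE1,
      Matrix.one_mulVec]
    funext i; fin_cases i <;> simp [E1]
  rw [hcomp] at hE
  have h0 : r.coeff 0 = 0 := by have := congrFun hE 0; simpa using this
  have h1 : r.coeff 1 = 0 := by have := congrFun hE 1; simpa using this
  rw [hrw, h0, h1]; simp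


lemma den_clear (s : ℚ[X]) : ∃ (N : ℤ) (t : Polynomial ℤ), N ≠ 0 ∧
    t.map (Int.castRingHom ℚ) = C ((N : ℚ)) * s := by
  induction s using Polynomial.induction_on with
  | C r =>
    refine ⟨(r.den : ℤ), C r.num, by exact_mod_cast r.den_nz, ?_⟩
    rw [Polynomial.map_C, ← C_mul]
    congr 1
    have hden : ((r.den : ℚ)) ≠ 0 := by exact_mod_cast r.den_nz
    simp only [eq_intCast]
    push_cast
    linarith [(div_eq_iff hden).mp (Rat.num_div_den r)]
  | add p q hp hq =>
    obtain ⟨Np, tp, hNp, htp⟩ := hp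
    obtain ⟨Nq, tq, hNq, htq⟩ := hq
    refine ⟨Np * Nq, C Nq * tp + C Np * tq, mul_ne_zero hNp hNq, ?_⟩
    rw [Polynomial.map_add, Polynomial.map_mul, Polynomial.map_mul, Polynomial.map_C,
      Polynomial.map_C, htp, htq]
    simp only [eq_intCast, Int.cast_mul, C_mul]
    ring
  | monomial n r ih =>
    obtain ⟨N, t, hN, ht⟩ := ih
    refine ⟨N, t * X, hN, ?_⟩
    rw [Polynomial.map_mul, Polynomial.map_X, ht]
    ring

def qZ (c a b : ℤ) : Polynomial ℤ := C c * X ^ 2 + C a * X + C b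

lemma qZ_coeff0 (c a b : ℤ) : (qZ c a b).coeff 0 = b := by
  simp only [qZ, coeff_add, coeff_C_mul, coeff_X_pow, coeff_X, coeff_C]
  norm_num

lemma qZ_coeff1 (c a b : ℤ) : (qZ c a b).coeff 1 = a := by
  simp only [qZ, coeff_add, coeff_C_mul, coeff_X_pow, coeff_X, coeff_C]
  norm_num

lemma qZ_coeff2 (c a b : ℤ) : (qZ c a b).coeff 2 = c := by
  simp only [qZ, coeff_add, coeff_C_mul, coeff_X_pow, coeff_X, coeff_C]
  norm_num

lemma qZ_primitive (c a b : ℤ) (hprim : Int.gcd c (Int.gcd a b) = 1) :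
    (qZ c a b).IsPrimitive := by
  intro r hr
  rw [C_dvd_iff_dvd_coeff] at hr
  have h0 := hr 0; have h1 := hr 1; have h2 := hr 2
  rw [qZ_coeff0] at h0; rw [qZ_coeff1] at h1; rw [qZ_coeff2] at h2
  have : r ∣ ((Int.gcd c (Int.gcd a b) : ℤ)) :=
    Int.dvd_coe_gcd h2 (Int.dvd_coe_gcd h1 h0)
  rw [hprim] at this
  exact isUnit_of_dvd_one (by exact_mod_cast this)

lemma qZ_map (c a b : ℤ) (ha : (a : ℚ) = (c : ℚ) * α) (hb : (b : ℚ) = (c : ℚ) * β) :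
    (qZ c a b).map (Int.castRingHom ℚ) = C ((c : ℚ)) * pQ α β := by
  simp only [qZ, pQ, Polynomial.map_add, Polynomial.map_mul, Polynomial.map_pow,
    Polynomial.map_C, Polynomial.map_X]
  rw [show ((Int.castRingHom ℚ) a) = (a:ℚ) from eq_intCast _ _,
    show ((Int.castRingHom ℚ) b) = (b:ℚ) from eq_intCast _ _,
    show ((Int.castRingHom ℚ) c) = (c:ℚ) from eq_intCast _ _, ha, hb, C_mul, C_mul]
  ring

lemma keyU (hA : A = !![0, -β; 1, -α]) (c a b : ℤ) (hc : 0 < c)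
    (ha : (a : ℚ) = (c : ℚ) * α) (hb : (b : ℚ) = (c : ℚ) * β)
    (hprim : Int.gcd c (Int.gcd a b) = 1)
    (m : ℤ) (g : Polynomial ℤ) (hmg : castv ![m, 0] = A.mulVec (vecRep A g)) :
    b ∣ m := by
  set wZ : Polynomial ℤ := X * g - C m with hwZ
  have h0 : vecRep A wZ = 0 := by
    rw [hwZ, vecRep_sub, vecRep_Xmul, vecRep_C, ← hmg]
    exact sub_self _
  have hdvd : pQ α β ∣ wZ.map (Int.castRingHom ℚ) :=
    aeval_E1_zero α β A hA _ h0
  obtain ⟨s, hs⟩ := hdvd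
  obtain ⟨N, t, hN, ht⟩ := den_clear s
  have hqmap := qZ_map α β c a b ha hb
  have hmapeq : (C (N * c) * wZ).map (Int.castRingHom ℚ) = (qZ c a b * t).map (Int.castRingHom ℚ) := by
    rw [Polynomial.map_mul, Polynomial.map_mul, Polynomial.map_C, hqmap, ht, hs]
    simp only [eq_intCast, Int.cast_mul, C_mul]
    ring
  have heq : C (N * c) * wZ = qZ c a b * t :=
    Polynomial.map_injective (Int.castRingHom ℚ) Int.cast_injective hmapeq
  -- content argument
  have hcont : (N * c) ∣ t.content := by
    have h1 : (C (N * c) * wZ).content = normalize (N * c) * wZ.content := content_C_mul _ _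
    have h2 : (qZ c a b * t).content = t.content := by
      rw [content_mul, (qZ_primitive c a b hprim).content_eq_one, one_mul]
    have h3 : normalize (N * c) * wZ.content = t.content := by rw [← h1, heq, h2]
    exact Dvd.dvd.trans (normalize_associated (N*c)).symm.dvd ⟨wZ.content, h3.symm⟩
  have hCdvd : C (N * c) ∣ t := by
    rw [C_dvd_iff_dvd_coeff]
    exact fun i => dvd_trans hcont (content_dvd_coeff i)
  obtain ⟨t₁, ht₁⟩ := hCdvd
  have hNc : (C (N * c) : Polynomial ℤ) ≠ 0 := by
    rw [Ne, C_eq_zero]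
    exact mul_ne_zero hN (by omega)
  have hfinal : wZ = qZ c a b * t₁ := by
    apply mul_left_cancel₀ hNc
    rw [heq, ht₁]
    ring
  have hc0 : wZ.coeff 0 = -m := by
    rw [hwZ]
    simp [coeff_sub, Polynomial.mul_coeff_zero]
  have hc0' : (qZ c a b * t₁).coeff 0 = b * t₁.coeff 0 := by
    rw [Polynomial.mul_coeff_zero, qZ_coeff0]
  rw [hfinal, hc0'] at hc0
  exact ⟨-(t₁.coeff 0), by linarith [hc0]⟩

lemma castv00 : castv ![(0:ℤ), 0] = 0 := by
  funext i; fin_cases i <;> simp [castv]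

section Dyn

variable (c a b : ℤ) (Φ : (Fin 2 → ℚ) → Fin 2 → ℚ)

/-- Digit uniqueness. -/
lemma digit_eq
    (hα : 1 < α) (hαβ2 : α ≤ β) (hc : 0 < c)
    (ha : (a : ℚ) = (c : ℚ) * α) (hb : (b : ℚ) = (c : ℚ) * β)
    (hprim : Int.gcd c (Int.gcd a b) = 1)
    (hA : A = !![0, -β; 1, -α])
    (hΦmem : ∀ x ∈ intSpan A, Φ x ∈ intSpan A)
    (hΦ : ∀ x ∈ intSpan A, ∃ ν : ℤ, 0 ≤ ν ∧ ν ≤ |b| - 1 ∧ x = digitVec ν + A.mulVec (Φ x))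
    {x y : Fin 2 → ℚ} (hx : x ∈ intSpan A) (hy : y ∈ intSpan A)
    (d' : ℤ) (hd0 : 0 ≤ d') (hd1 : d' ≤ b - 1)
    (hxy : x = digitVec d' + A.mulVec y) : Φ x = y := by
  have hb0 : (0:ℤ) < b := by
    have hcq : (0:ℚ) < c := by exact_mod_cast hc
    have : (0:ℚ) < b := by rw [hb]; exact mul_pos hcq (by linarith)
    exact_mod_cast this
  obtain ⟨ν, hν0, hν1, hνx⟩ := hΦ x hx
  rw [abs_of_pos hb0] at hν1
  have hmem := hΦmem x hx
  obtain ⟨gy, hgy⟩ := rep_of_mem A hy α β hA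
  obtain ⟨gp, hgp⟩ := rep_of_mem A hmem α β hA
  have hkey : digitVec ν + A.mulVec (Φ x) = digitVec d' + A.mulVec y := by
    rw [← hνx, ← hxy]
  have hsub : castv ![d' - ν, 0] = A.mulVec (vecRep A (gp - gy)) := by
    rw [vecRep_sub, ← hgp, ← hgy, Matrix.mulVec_sub]
    have h2 : A.mulVec (Φ x) - A.mulVec y = digitVec d' - digitVec ν := by
      have := hkey
      linear_combination (norm := abel) this
    rw [h2]
    funext i; fin_cases i <;> simp [digitVec, castv] <;> push_cast <;> ring
  have hdvd : b ∣ (d' - ν) := keyU A α β hA c a b hc ha hb hprim _ _ hsub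
  have hzero : d' - ν = 0 := Int.eq_zero_of_abs_lt_dvd hdvd (abs_lt.mpr ⟨by omega, by omega⟩)
  have hν : ν = d' := by omega
  subst hν
  have h3 : A.mulVec (Φ x - y) = 0 := by
    rw [Matrix.mulVec_sub]
    have := hkey
    linear_combination (norm := abel) this
  have hβ : β ≠ 0 := by intro h; rw [h] at hαβ2; linarith
  have := mulVec_eq_zero α β hβ A hA _ h3
  have : Φ x - y = 0 := this
  linear_combination (norm := abel) this

def TI : (Fin 2 → ℤ) → Prop := fun w =>
  w = ![0,0] ∨ w = ![1,0] ∨ w = ![-1,0] ∨ w = ![c,0] ∨ w = ![-c,0] ∨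
  w = ![a,c] ∨ w = ![-a,-c] ∨ w = ![a-c,c] ∨ w = ![c-a,-c]

lemma facts (hα : 1 < α) (hαβ2 : α ≤ β) (hc : 0 < c)
    (ha : (a : ℚ) = (c : ℚ) * α) (hb : (b : ℚ) = (c : ℚ) * β) :
    1 ≤ c ∧ c + 1 ≤ a ∧ a ≤ b := by
  have hcq : (0:ℚ) < c := by exact_mod_cast hc
  have h1 : (c:ℚ) < a := by rw [ha]; nlinarith
  have h2 : (a:ℚ) ≤ b := by rw [ha, hb]; nlinarith
  refine ⟨by omega, ?_, ?_⟩
  · exact_mod_cast h1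
  · exact_mod_cast h2

lemma step_core (hα : 1 < α) (hαβ2 : α ≤ β) (hc : 0 < c)
    (ha : (a : ℚ) = (c : ℚ) * α) (hb : (b : ℚ) = (c : ℚ) * β)
    (hprim : Int.gcd c (Int.gcd a b) = 1)
    (hA : A = !![0, -β; 1, -α])
    (hΦmem : ∀ x ∈ intSpan A, Φ x ∈ intSpan A)
    (hΦ : ∀ x ∈ intSpan A, ∃ ν : ℤ, 0 ≤ ν ∧ ν ≤ |b| - 1 ∧ x = digitVec ν + A.mulVec (Φ x))
    (x : Fin 2 → ℚ) (hx : x ∈ intSpan A) (ν : ℤ)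
    (hν : x = digitVec ν + A.mulVec (Φ x))
    (wt w₁ : Fin 2 → ℤ) (d' : ℤ) (hd0 : 0 ≤ d') (hd1 : d' ≤ b - 1)
    (key : digitVec ν + castv wt = digitVec d' + A.mulVec (castv w₁)) :
    Φ (x + castv wt) = Φ x + castv w₁ := by
  apply digit_eq A α β c a b Φ hα hαβ2 hc ha hb hprim hA hΦmem hΦ (mem_addInt A hx wt) (mem_addInt A (hΦmem x hx) w₁) d' hd0 hd1
  have e1 : x + castv wt = (digitVec ν + castv wt) + A.mulVec (Φ x) := by
    conv_lhs => rw [hν]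
    abel
  rw [e1, key, Matrix.mulVec_add]
  abel

lemma phi_int (hα : 1 < α) (hαβ2 : α ≤ β) (hc : 0 < c)
    (ha : (a : ℚ) = (c : ℚ) * α) (hb : (b : ℚ) = (c : ℚ) * β)
    (hprim : Int.gcd c (Int.gcd a b) = 1)
    (hA : A = !![0, -β; 1, -α])
    (hΦmem : ∀ x ∈ intSpan A, Φ x ∈ intSpan A)
    (hΦ : ∀ x ∈ intSpan A, ∃ ν : ℤ, 0 ≤ ν ∧ ν ≤ |b| - 1 ∧ x = digitVec ν + A.mulVec (Φ x))
    (w w₁ : Fin 2 → ℤ) (d' : ℤ) (hd0 : 0 ≤ d') (hd1 : d' ≤ b - 1)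
    (key : castv w = digitVec d' + A.mulVec (castv w₁)) :
    Φ (castv w) = castv w₁ :=
  digit_eq A α β c a b Φ hα hαβ2 hc ha hb hprim hA hΦmem hΦ (mem_intvec A w) (mem_intvec A w₁) d' hd0 hd1 key

lemma step_T (hα : 1 < α) (hαβ2 : α ≤ β) (hc : 0 < c)
    (ha : (a : ℚ) = (c : ℚ) * α) (hb : (b : ℚ) = (c : ℚ) * β)
    (hprim : Int.gcd c (Int.gcd a b) = 1)
    (hA : A = !![0, -β; 1, -α])
    (hΦmem : ∀ x ∈ intSpan A, Φ x ∈ intSpan A)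
    (hΦ : ∀ x ∈ intSpan A, ∃ ν : ℤ, 0 ≤ ν ∧ ν ≤ |b| - 1 ∧ x = digitVec ν + A.mulVec (Φ x)) :
    ∀ x ∈ intSpan A, ∀ wt : Fin 2 → ℤ, TI c a wt →
      ∃ w₁ : Fin 2 → ℤ, TI c a w₁ ∧ Φ (x + castv wt) = Φ x + castv w₁ := by
  obtain ⟨hc1, hca, hab⟩ := facts α β c a b hα hαβ2 hc ha hb
  intro x hx wt hwt
  have hb0 : (0:ℤ) < b := by omega
  obtain ⟨ν, hν0, hν1, hνx⟩ := hΦ x hx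
  rw [abs_of_pos hb0] at hν1
  have mv : ∀ u v : ℤ, A.mulVec (castv ![u, v]) = ![-β*(v:ℚ), (u:ℚ) - α*(v:ℚ)] := by
    intro u v; rw [castv_pair]; exact mulVec_explicit α β A hA _ _
  rcases hwt with h|h|h|h|h|h|h|h|h <;> subst h
  · exact ⟨![0,0], Or.inl rfl, step_core A α β c a b Φ hα hαβ2 hc ha hb hprim hA hΦmem hΦ x hx ν hνx _ _ ν hν0 hν1 (by rw [mv]; funext i; fin_cases i <;> simp [digitVec, castv_pair] <;> (try push_cast) <;> (first | ring1 | linear_combination hb | linear_combination -hb | linear_combination ha | linear_combination -ha | linear_combination hb - ha | linear_combination ha - hb | linear_combination ha + hb | linear_combination -ha - hb))⟩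
  · rcases le_or_gt (ν + 1) (b - 1) with hcs|hcs
    · exact ⟨![0,0], Or.inl rfl, step_core A α β c a b Φ hα hαβ2 hc ha hb hprim hA hΦmem hΦ x hx ν hνx _ _ (ν+1) (by omega) (by omega)
        (by rw [mv]; funext i; fin_cases i <;> simp [digitVec, castv_pair] <;> (try push_cast) <;> (first | ring1 | linear_combination hb | linear_combination -hb | linear_combination ha | linear_combination -ha | linear_combination hb - ha | linear_combination ha - hb | linear_combination ha + hb | linear_combination -ha - hb))⟩
    · have hν2 : ν = b - 1 := by omega
      subst hν2
      exact ⟨![-a,-c], by unfold TI; tauto, step_core A α β c a b Φ hα hαβ2 hc ha hb hprim hA hΦmem hΦ x hx _ hνx _ _ 0 (by omega) (by omega)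
        (by rw [mv]; funext i; fin_cases i <;> simp [digitVec, castv_pair] <;> (try push_cast) <;> (first | ring1 | linear_combination hb | linear_combination -hb | linear_combination ha | linear_combination -ha | linear_combination hb - ha | linear_combination ha - hb | linear_combination ha + hb | linear_combination -ha - hb))⟩
  · rcases le_or_gt 1 ν with hcs|hcs
    · exact ⟨![0,0], Or.inl rfl, step_core A α β c a b Φ hα hαβ2 hc ha hb hprim hA hΦmem hΦ x hx ν hνx _ _ (ν-1) (by omega) (by omega)
        (by rw [mv]; funext i; fin_cases i <;> simp [digitVec, castv_pair] <;> (try push_cast) <;> (first | ring1 | linear_combination hb | linear_combination -hb | linear_combination ha | linear_combination -ha | linear_combination hb - ha | linear_combination ha - hb | linear_combination ha + hb | linear_combination -ha - hb))⟩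
    · have hν2 : ν = 0 := by omega
      subst hν2
      exact ⟨![a,c], by unfold TI; tauto, step_core A α β c a b Φ hα hαβ2 hc ha hb hprim hA hΦmem hΦ x hx _ hνx _ _ (b-1) (by omega) (by omega)
        (by rw [mv]; funext i; fin_cases i <;> simp [digitVec, castv_pair] <;> (try push_cast) <;> (first | ring1 | linear_combination hb | linear_combination -hb | linear_combination ha | linear_combination -ha | linear_combination hb - ha | linear_combination ha - hb | linear_combination ha + hb | linear_combination -ha - hb))⟩
  · rcases le_or_gt (ν + c) (b - 1) with hcs|hcs
    · exact ⟨![0,0], Or.inl rfl, step_core A α β c a b Φ hα hαβ2 hc ha hb hprim hA hΦmem hΦ x hx ν hνx _ _ (ν+c) (by omega) (by omega)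
        (by rw [mv]; funext i; fin_cases i <;> simp [digitVec, castv_pair] <;> (try push_cast) <;> (first | ring1 | linear_combination hb | linear_combination -hb | linear_combination ha | linear_combination -ha | linear_combination hb - ha | linear_combination ha - hb | linear_combination ha + hb | linear_combination -ha - hb))⟩
    · exact ⟨![-a,-c], by unfold TI; tauto, step_core A α β c a b Φ hα hαβ2 hc ha hb hprim hA hΦmem hΦ x hx ν hνx _ _ (ν+c-b) (by omega) (by omega)
        (by rw [mv]; funext i; fin_cases i <;> simp [digitVec, castv_pair] <;> (try push_cast) <;> (first | ring1 | linear_combination hb | linear_combination -hb | linear_combination ha | linear_combination -ha | linear_combination hb - ha | linear_combination ha - hb | linear_combination ha + hb | linear_combination -ha - hb))⟩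
  · rcases le_or_gt c ν with hcs|hcs
    · exact ⟨![0,0], Or.inl rfl, step_core A α β c a b Φ hα hαβ2 hc ha hb hprim hA hΦmem hΦ x hx ν hνx _ _ (ν-c) (by omega) (by omega)
        (by rw [mv]; funext i; fin_cases i <;> simp [digitVec, castv_pair] <;> (try push_cast) <;> (first | ring1 | linear_combination hb | linear_combination -hb | linear_combination ha | linear_combination -ha | linear_combination hb - ha | linear_combination ha - hb | linear_combination ha + hb | linear_combination -ha - hb))⟩
    · exact ⟨![a,c], by unfold TI; tauto, step_core A α β c a b Φ hα hαβ2 hc ha hb hprim hA hΦmem hΦ x hx ν hνx _ _ (ν-c+b) (by omega) (by omega)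
        (by rw [mv]; funext i; fin_cases i <;> simp [digitVec, castv_pair] <;> (try push_cast) <;> (first | ring1 | linear_combination hb | linear_combination -hb | linear_combination ha | linear_combination -ha | linear_combination hb - ha | linear_combination ha - hb | linear_combination ha + hb | linear_combination -ha - hb))⟩
  · rcases le_or_gt (ν + a) (b - 1) with hcs|hcs
    · exact ⟨![c,0], by unfold TI; tauto, step_core A α β c a b Φ hα hαβ2 hc ha hb hprim hA hΦmem hΦ x hx ν hνx _ _ (ν+a) (by omega) (by omega)
        (by rw [mv]; funext i; fin_cases i <;> simp [digitVec, castv_pair] <;> (try push_cast) <;> (first | ring1 | linear_combination hb | linear_combination -hb | linear_combination ha | linear_combination -ha | linear_combination hb - ha | linear_combination ha - hb | linear_combination ha + hb | linear_combination -ha - hb))⟩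
    · exact ⟨![c-a,-c], by unfold TI; tauto, step_core A α β c a b Φ hα hαβ2 hc ha hb hprim hA hΦmem hΦ x hx ν hνx _ _ (ν+a-b) (by omega) (by omega)
        (by rw [mv]; funext i; fin_cases i <;> simp [digitVec, castv_pair] <;> (try push_cast) <;> (first | ring1 | linear_combination hb | linear_combination -hb | linear_combination ha | linear_combination -ha | linear_combination hb - ha | linear_combination ha - hb | linear_combination ha + hb | linear_combination -ha - hb))⟩
  · rcases le_or_gt a ν with hcs|hcs
    · exact ⟨![-c,0], by unfold TI; tauto, step_core A α β c a b Φ hα hαβ2 hc ha hb hprim hA hΦmem hΦ x hx ν hνx _ _ (ν-a) (by omega) (by omega)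
        (by rw [mv]; funext i; fin_cases i <;> simp [digitVec, castv_pair] <;> (try push_cast) <;> (first | ring1 | linear_combination hb | linear_combination -hb | linear_combination ha | linear_combination -ha | linear_combination hb - ha | linear_combination ha - hb | linear_combination ha + hb | linear_combination -ha - hb))⟩
    · exact ⟨![a-c,c], by unfold TI; tauto, step_core A α β c a b Φ hα hαβ2 hc ha hb hprim hA hΦmem hΦ x hx ν hνx _ _ (ν-a+b) (by omega) (by omega)
        (by rw [mv]; funext i; fin_cases i <;> simp [digitVec, castv_pair] <;> (try push_cast) <;> (first | ring1 | linear_combination hb | linear_combination -hb | linear_combination ha | linear_combination -ha | linear_combination hb - ha | linear_combination ha - hb | linear_combination ha + hb | linear_combination -ha - hb))⟩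
  · rcases le_or_gt (ν + a - c) (b - 1) with hcs|hcs
    · exact ⟨![c,0], by unfold TI; tauto, step_core A α β c a b Φ hα hαβ2 hc ha hb hprim hA hΦmem hΦ x hx ν hνx _ _ (ν+a-c) (by omega) (by omega)
        (by rw [mv]; funext i; fin_cases i <;> simp [digitVec, castv_pair] <;> (try push_cast) <;> (first | ring1 | linear_combination hb | linear_combination -hb | linear_combination ha | linear_combination -ha | linear_combination hb - ha | linear_combination ha - hb | linear_combination ha + hb | linear_combination -ha - hb))⟩
    · exact ⟨![c-a,-c], by unfold TI; tauto, step_core A α β c a b Φ hα hαβ2 hc ha hb hprim hA hΦmem hΦ x hx ν hνx _ _ (ν+a-c-b) (by omega) (by omega)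
        (by rw [mv]; funext i; fin_cases i <;> simp [digitVec, castv_pair] <;> (try push_cast) <;> (first | ring1 | linear_combination hb | linear_combination -hb | linear_combination ha | linear_combination -ha | linear_combination hb - ha | linear_combination ha - hb | linear_combination ha + hb | linear_combination -ha - hb))⟩
  · rcases le_or_gt 0 (ν + c - a) with hcs|hcs
    · exact ⟨![-c,0], by unfold TI; tauto, step_core A α β c a b Φ hα hαβ2 hc ha hb hprim hA hΦmem hΦ x hx ν hνx _ _ (ν+c-a) (by omega) (by omega)
        (by rw [mv]; funext i; fin_cases i <;> simp [digitVec, castv_pair] <;> (try push_cast) <;> (first | ring1 | linear_combination hb | linear_combination -hb | linear_combination ha | linear_combination -ha | linear_combination hb - ha | linear_combination ha - hb | linear_combination ha + hb | linear_combination -ha - hb))⟩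
    · exact ⟨![a-c,c], by unfold TI; tauto, step_core A α β c a b Φ hα hαβ2 hc ha hb hprim hA hΦmem hΦ x hx ν hνx _ _ (ν+c-a+b) (by omega) (by omega)
        (by rw [mv]; funext i; fin_cases i <;> simp [digitVec, castv_pair] <;> (try push_cast) <;> (first | ring1 | linear_combination hb | linear_combination -hb | linear_combination ha | linear_combination -ha | linear_combination hb - ha | linear_combination ha - hb | linear_combination ha + hb | linear_combination -ha - hb))⟩

lemma phi_zero (hα : 1 < α) (hαβ2 : α ≤ β) (hc : 0 < c)
    (ha : (a : ℚ) = (c : ℚ) * α) (hb : (b : ℚ) = (c : ℚ) * β)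
    (hprim : Int.gcd c (Int.gcd a b) = 1)
    (hA : A = !![0, -β; 1, -α])
    (hΦmem : ∀ x ∈ intSpan A, Φ x ∈ intSpan A)
    (hΦ : ∀ x ∈ intSpan A, ∃ ν : ℤ, 0 ≤ ν ∧ ν ≤ |b| - 1 ∧ x = digitVec ν + A.mulVec (Φ x)) : Φ 0 = 0 := by
  obtain ⟨hc1, hca, hab⟩ := facts α β c a b hα hαβ2 hc ha hb
  have h := phi_int A α β c a b Φ hα hαβ2 hc ha hb hprim hA hΦmem hΦ ![0,0] ![0,0] 0 le_rfl (by omega)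
    (by rw [castv00]; funext i; fin_cases i <;> simp [digitVec, castv])
  rwa [castv00] at h

lemma iter_phi_zero (hα : 1 < α) (hαβ2 : α ≤ β) (hc : 0 < c)
    (ha : (a : ℚ) = (c : ℚ) * α) (hb : (b : ℚ) = (c : ℚ) * β)
    (hprim : Int.gcd c (Int.gcd a b) = 1)
    (hA : A = !![0, -β; 1, -α])
    (hΦmem : ∀ x ∈ intSpan A, Φ x ∈ intSpan A)
    (hΦ : ∀ x ∈ intSpan A, ∃ ν : ℤ, 0 ≤ ν ∧ ν ≤ |b| - 1 ∧ x = digitVec ν + A.mulVec (Φ x)) : ∀ k : ℕ, Φ^[k] 0 = 0 := by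
  intro k
  induction k with
  | zero => rfl
  | succ k ih => rw [Function.iterate_succ_apply, phi_zero A α β c a b Φ hα hαβ2 hc ha hb hprim hA hΦmem hΦ, ih]

lemma tzero (hα : 1 < α) (hαβ2 : α ≤ β) (hc : 0 < c)
    (ha : (a : ℚ) = (c : ℚ) * α) (hb : (b : ℚ) = (c : ℚ) * β)
    (hprim : Int.gcd c (Int.gcd a b) = 1)
    (hA : A = !![0, -β; 1, -α])
    (hΦmem : ∀ x ∈ intSpan A, Φ x ∈ intSpan A)
    (hΦ : ∀ x ∈ intSpan A, ∃ ν : ℤ, 0 ≤ ν ∧ ν ≤ |b| - 1 ∧ x = digitVec ν + A.mulVec (Φ x)) :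
    ∀ wt : Fin 2 → ℤ, TI c a wt → ∃ k : ℕ, Φ^[k] (castv wt) = 0 := by
  obtain ⟨hc1, hca, hab⟩ := facts α β c a b hα hαβ2 hc ha hb
  have mv : ∀ u v : ℤ, A.mulVec (castv ![u, v]) = ![-β*(v:ℚ), (u:ℚ) - α*(v:ℚ)] := by
    intro u v; rw [castv_pair]; exact mulVec_explicit α β A hA _ _
  have hv1 : Φ (castv ![1,0]) = 0 := by
    have := phi_int A α β c a b Φ hα hαβ2 hc ha hb hprim hA hΦmem hΦ ![1,0] ![0,0] 1 (by omega) (by omega) (by rw [mv]; funext i; fin_cases i <;> simp [digitVec, castv_pair] <;> (try push_cast) <;> (first | ring1 | linear_combination hb | linear_combination -hb | linear_combination ha | linear_combination -ha | linear_combination hb - ha | linear_combination ha - hb | linear_combination ha + hb | linear_combination -ha - hb))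
    rwa [castv00] at this
  have hvc : Φ (castv ![c,0]) = 0 := by
    have := phi_int A α β c a b Φ hα hαβ2 hc ha hb hprim hA hΦmem hΦ ![c,0] ![0,0] c (by omega) (by omega) (by rw [mv]; funext i; fin_cases i <;> simp [digitVec, castv_pair] <;> (try push_cast) <;> (first | ring1 | linear_combination hb | linear_combination -hb | linear_combination ha | linear_combination -ha | linear_combination hb - ha | linear_combination ha - hb | linear_combination ha + hb | linear_combination -ha - hb))
    rwa [castv00] at this
  have hvm1 : Φ (castv ![-1,0]) = castv ![a,c] :=
    phi_int A α β c a b Φ hα hαβ2 hc ha hb hprim hA hΦmem hΦ ![-1,0] ![a,c] (b-1) (by omega) (by omega) (by rw [mv]; funext i; fin_cases i <;> simp [digitVec, castv_pair] <;> (try push_cast) <;> (first | ring1 | linear_combination hb | linear_combination -hb | linear_combination ha | linear_combination -ha | linear_combination hb - ha | linear_combination ha - hb | linear_combination ha + hb | linear_combination -ha - hb))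
  have hvmc : Φ (castv ![-c,0]) = castv ![a,c] :=
    phi_int A α β c a b Φ hα hαβ2 hc ha hb hprim hA hΦmem hΦ ![-c,0] ![a,c] (b-c) (by omega) (by omega) (by rw [mv]; funext i; fin_cases i <;> simp [digitVec, castv_pair] <;> (try push_cast) <;> (first | ring1 | linear_combination hb | linear_combination -hb | linear_combination ha | linear_combination -ha | linear_combination hb - ha | linear_combination ha - hb | linear_combination ha + hb | linear_combination -ha - hb))
  have hvmac : Φ (castv ![-a,-c]) = castv ![a-c,c] :=
    phi_int A α β c a b Φ hα hαβ2 hc ha hb hprim hA hΦmem hΦ ![-a,-c] ![a-c,c] (b-a) (by omega) (by omega) (by rw [mv]; funext i; fin_cases i <;> simp [digitVec, castv_pair] <;> (try push_cast) <;> (first | ring1 | linear_combination hb | linear_combination -hb | linear_combination ha | linear_combination -ha | linear_combination hb - ha | linear_combination ha - hb | linear_combination ha + hb | linear_combination -ha - hb))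
  have hvamc : Φ (castv ![a-c,c]) = castv ![c,0] :=
    phi_int A α β c a b Φ hα hαβ2 hc ha hb hprim hA hΦmem hΦ ![a-c,c] ![c,0] (a-c) (by omega) (by omega) (by rw [mv]; funext i; fin_cases i <;> simp [digitVec, castv_pair] <;> (try push_cast) <;> (first | ring1 | linear_combination hb | linear_combination -hb | linear_combination ha | linear_combination -ha | linear_combination hb - ha | linear_combination ha - hb | linear_combination ha + hb | linear_combination -ha - hb))
  have hvcma : Φ (castv ![c-a,-c]) = castv ![a-c,c] :=
    phi_int A α β c a b Φ hα hαβ2 hc ha hb hprim hA hΦmem hΦ ![c-a,-c] ![a-c,c] (b+c-a) (by omega) (by omega) (by rw [mv]; funext i; fin_cases i <;> simp [digitVec, castv_pair] <;> (try push_cast) <;> (first | ring1 | linear_combination hb | linear_combination -hb | linear_combination ha | linear_combination -ha | linear_combination hb - ha | linear_combination ha - hb | linear_combination ha + hb | linear_combination -ha - hb))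
  have hac : ∃ k : ℕ, Φ^[k] (castv ![a,c]) = 0 := by
    rcases lt_or_eq_of_le hab with hlt | heq
    · have hvac : Φ (castv ![a,c]) = castv ![c,0] :=
        phi_int A α β c a b Φ hα hαβ2 hc ha hb hprim hA hΦmem hΦ ![a,c] ![c,0] a (by omega) (by omega) (by rw [mv]; funext i; fin_cases i <;> simp [digitVec, castv_pair] <;> (try push_cast) <;> (first | ring1 | linear_combination hb | linear_combination -hb | linear_combination ha | linear_combination -ha | linear_combination hb - ha | linear_combination ha - hb | linear_combination ha + hb | linear_combination -ha - hb))
      exact ⟨2, by rw [Function.iterate_succ_apply, hvac, Function.iterate_succ_apply, hvc,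
        Function.iterate_zero_apply]⟩
    · have hvac : Φ (castv ![a,c]) = castv ![c-a,-c] :=
        phi_int A α β c a b Φ hα hαβ2 hc ha hb hprim hA hΦmem hΦ ![a,c] ![c-a,-c] 0 (by omega) (by omega) (by
          have hba : (b:ℚ) = (a:ℚ) := by rw [← heq]
          rw [mv]; funext i; fin_cases i <;> simp [digitVec, castv_pair] <;> (try push_cast) <;> (first | ring1 | linear_combination hb | linear_combination hba | linear_combination hb - hba | linear_combination hba - ha | linear_combination -hb | linear_combination ha | linear_combination -ha | linear_combination hb - ha | linear_combination ha - hb | linear_combination ha + hb | linear_combination -ha - hb))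
      exact ⟨4, by rw [Function.iterate_succ_apply, hvac, Function.iterate_succ_apply, hvcma,
        Function.iterate_succ_apply, hvamc, Function.iterate_succ_apply, hvc,
        Function.iterate_zero_apply]⟩
  intro wt hwt
  obtain ⟨ka, hka⟩ := hac
  rcases hwt with h|h|h|h|h|h|h|h|h <;> subst h
  · exact ⟨0, by rw [Function.iterate_zero_apply, castv00]⟩
  · exact ⟨1, by rw [Function.iterate_one, hv1]⟩
  · exact ⟨ka + 1, by rw [Function.iterate_succ_apply, hvm1, hka]⟩
  · exact ⟨1, by rw [Function.iterate_one, hvc]⟩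
  · exact ⟨ka + 1, by rw [Function.iterate_succ_apply, hvmc, hka]⟩
  · exact ⟨ka, hka⟩
  · exact ⟨3, by rw [Function.iterate_succ_apply, hvmac, Function.iterate_succ_apply, hvamc,
      Function.iterate_succ_apply, hvc, Function.iterate_zero_apply]⟩
  · exact ⟨2, by rw [Function.iterate_succ_apply, hvamc, Function.iterate_succ_apply, hvc,
      Function.iterate_zero_apply]⟩
  · exact ⟨3, by rw [Function.iterate_succ_apply, hvcma, Function.iterate_succ_apply, hvamc,
      Function.iterate_succ_apply, hvc, Function.iterate_zero_apply]⟩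

lemma main_ind (hα : 1 < α) (hαβ2 : α ≤ β) (hc : 0 < c)
    (ha : (a : ℚ) = (c : ℚ) * α) (hb : (b : ℚ) = (c : ℚ) * β)
    (hprim : Int.gcd c (Int.gcd a b) = 1)
    (hA : A = !![0, -β; 1, -α])
    (hΦmem : ∀ x ∈ intSpan A, Φ x ∈ intSpan A)
    (hΦ : ∀ x ∈ intSpan A, ∃ ν : ℤ, 0 ≤ ν ∧ ν ≤ |b| - 1 ∧ x = digitVec ν + A.mulVec (Φ x)) :
    ∀ (k : ℕ) (x : Fin 2 → ℚ), x ∈ intSpan A → Φ^[k] x = 0 →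
      ∀ wt : Fin 2 → ℤ, TI c a wt → ∃ k' : ℕ, Φ^[k'] (x + castv wt) = 0 := by
  intro k
  induction k with
  | zero =>
    intro x hx h0 wt hwt
    have hx0 : x = 0 := by simpa using h0
    subst hx0
    rw [zero_add]
    exact tzero A α β c a b Φ hα hαβ2 hc ha hb hprim hA hΦmem hΦ wt hwt
  | succ k ih =>
    intro x hx h0 wt hwt
    obtain ⟨w₁, hw₁, heq⟩ := step_T A α β c a b Φ hα hαβ2 hc ha hb hprim hA hΦmem hΦ x hx wt hwt
    have h1 : Φ^[k] (Φ x) = 0 := by rwa [← Function.iterate_succ_apply]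
    obtain ⟨k', hk'⟩ := ih (Φ x) (hΦmem x hx) h1 w₁ hw₁
    exact ⟨k' + 1, by rw [Function.iterate_succ_apply, heq, hk']⟩

lemma trans_int (hα : 1 < α) (hαβ2 : α ≤ β) (hc : 0 < c)
    (ha : (a : ℚ) = (c : ℚ) * α) (hb : (b : ℚ) = (c : ℚ) * β)
    (hprim : Int.gcd c (Int.gcd a b) = 1)
    (hA : A = !![0, -β; 1, -α])
    (hΦmem : ∀ x ∈ intSpan A, Φ x ∈ intSpan A)
    (hΦ : ∀ x ∈ intSpan A, ∃ ν : ℤ, 0 ≤ ν ∧ ν ≤ |b| - 1 ∧ x = digitVec ν + A.mulVec (Φ x)) :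
    ∀ (m : ℤ) (x : Fin 2 → ℚ), x ∈ intSpan A → (∃ k : ℕ, Φ^[k] x = 0) →
      ∃ k : ℕ, Φ^[k] (x + castv ![m, 0]) = 0 := by
  have hsplit : ∀ (m : ℤ) (e : ℤ) (x : Fin 2 → ℚ),
      x + castv ![m + e, 0] = (x + castv ![m, 0]) + castv ![e, 0] := by
    intro m e x
    rw [add_assoc]
    congr 1
    funext i; fin_cases i <;> simp [castv] <;> push_cast <;> ring
  intro m
  induction m using Int.induction_on with
  | zero =>
    intro x hx ⟨k, hk⟩
    exact ⟨k, by rw [castv00, add_zero]; exact hk⟩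
  | succ i ih =>
    intro x hx hk
    obtain ⟨k1, hk1⟩ := ih x hx hk
    obtain ⟨k2, hk2⟩ := main_ind A α β c a b Φ hα hαβ2 hc ha hb hprim hA hΦmem hΦ k1 (x + castv ![(i:ℤ), 0]) (mem_addInt A hx _) hk1
      ![1,0] (by unfold TI; tauto)
    exact ⟨k2, by rw [show ((i:ℤ) + 1) = (i:ℤ) + 1 from rfl, hsplit]; exact hk2⟩
  | pred i ih =>
    intro x hx hk
    obtain ⟨k1, hk1⟩ := ih x hx hk
    obtain ⟨k2, hk2⟩ := main_ind A α β c a b Φ hα hαβ2 hc ha hb hprim hA hΦmem hΦ k1 (x + castv ![(-i:ℤ), 0]) (mem_addInt A hx _) hk1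
      ![-1,0] (by unfold TI; tauto)
    exact ⟨k2, by rw [show (-(i:ℤ) - 1) = (-i:ℤ) + (-1) from by ring, hsplit]; exact hk2⟩

lemma amul (hα : 1 < α) (hαβ2 : α ≤ β) (hc : 0 < c)
    (ha : (a : ℚ) = (c : ℚ) * α) (hb : (b : ℚ) = (c : ℚ) * β)
    (hprim : Int.gcd c (Int.gcd a b) = 1)
    (hA : A = !![0, -β; 1, -α])
    (hΦmem : ∀ x ∈ intSpan A, Φ x ∈ intSpan A)
    (hΦ : ∀ x ∈ intSpan A, ∃ ν : ℤ, 0 ≤ ν ∧ ν ≤ |b| - 1 ∧ x = digitVec ν + A.mulVec (Φ x)) (x : Fin 2 → ℚ) (hx : x ∈ intSpan A) (hk : ∃ k : ℕ, Φ^[k] x = 0) :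
    ∃ k : ℕ, Φ^[k] (A.mulVec x) = 0 := by
  obtain ⟨hc1, hca, hab⟩ := facts α β c a b hα hαβ2 hc ha hb
  have h : Φ (A.mulVec x) = x := by
    apply digit_eq A α β c a b Φ hα hαβ2 hc ha hb hprim hA hΦmem hΦ (mem_Amul A hx) hx 0 le_rfl (by omega)
    have : digitVec 0 = 0 := by funext i; fin_cases i <;> simp [digitVec]
    rw [this, zero_add]
  obtain ⟨k, hk⟩ := hk
  exact ⟨k + 1, by rw [Function.iterate_succ_apply, h, hk]⟩

lemma gen (hα : 1 < α) (hαβ2 : α ≤ β) (hc : 0 < c)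
    (ha : (a : ℚ) = (c : ℚ) * α) (hb : (b : ℚ) = (c : ℚ) * β)
    (hprim : Int.gcd c (Int.gcd a b) = 1)
    (hA : A = !![0, -β; 1, -α])
    (hΦmem : ∀ x ∈ intSpan A, Φ x ∈ intSpan A)
    (hΦ : ∀ x ∈ intSpan A, ∃ ν : ℤ, 0 ≤ ν ∧ ν ≤ |b| - 1 ∧ x = digitVec ν + A.mulVec (Φ x)) : ∀ x ∈ intSpan A, ∃ k : ℕ, Φ^[k] x = 0 := by
  have mv : ∀ u v : ℤ, A.mulVec (castv ![u, v]) = ![-β*(v:ℚ), (u:ℚ) - α*(v:ℚ)] := by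
    intro u v; rw [castv_pair]; exact mulVec_explicit α β A hA _ _
  have HBASE : ∀ m : ℤ, ∃ k : ℕ, Φ^[k] (castv ![m, 0]) = 0 := by
    intro m
    obtain ⟨k, hk⟩ := trans_int A α β c a b Φ hα hαβ2 hc ha hb hprim hA hΦmem hΦ m 0 (mem_zero A) ⟨0, rfl⟩
    rw [zero_add] at hk
    exact ⟨k, hk⟩
  suffices H : ∀ (k : ℕ) (v : ℕ → Fin 2 → ℤ), ∃ k' : ℕ,
      Φ^[k'] (∑ j ∈ Finset.range (k + 1), (A ^ j).mulVec (fun i => ((v j i : ℚ)))) = 0 by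
    intro x hx
    obtain ⟨k, v, hv⟩ := hx
    rw [hv]
    exact H k v
  intro k
  induction k with
  | zero =>
    intro v
    have hx0 : (∑ j ∈ Finset.range 1, (A ^ j).mulVec (fun i => ((v j i : ℚ))))
        = A.mulVec (castv ![v 0 1, 0]) + castv ![v 0 0, 0] := by
      rw [Finset.sum_range_one, pow_zero, Matrix.one_mulVec, mv]
      funext i; fin_cases i <;> simp [castv, Matrix.vecHead, Matrix.vecTail] <;> ring
    rw [hx0]
    have h2 := amul A α β c a b Φ hα hαβ2 hc ha hb hprim hA hΦmem hΦ _ (mem_intvec A ![v 0 1, 0]) (HBASE (v 0 1))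
    exact trans_int A α β c a b Φ hα hαβ2 hc ha hb hprim hA hΦmem hΦ (v 0 0) _ (mem_Amul A (mem_intvec A _)) h2
  | succ k ih =>
    intro v
    rw [shift_sum]
    set S := ∑ j ∈ Finset.range (k + 1), (A ^ j).mulVec (fun i => ((v (j+1) i : ℚ))) with hS
    have hSmem : S ∈ intSpan A := ⟨k, fun j => v (j + 1), rfl⟩
    have h1 : ∃ k', Φ^[k'] S = 0 := ih (fun j => v (j + 1))
    have h2 := trans_int A α β c a b Φ hα hαβ2 hc ha hb hprim hA hΦmem hΦ (v 0 1) S hSmem h1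
    have h3 := amul A α β c a b Φ hα hαβ2 hc ha hb hprim hA hΦmem hΦ _ (mem_addInt A hSmem ![v 0 1, 0]) h2
    have h4 := trans_int A α β c a b Φ hα hαβ2 hc ha hb hprim hA hΦmem hΦ (v 0 0) _ (mem_Amul A (mem_addInt A hSmem _)) h3
    have hre : castv (v 0) + A.mulVec S
        = (A.mulVec (S + castv ![v 0 1, 0])) + castv ![v 0 0, 0] := by
      rw [Matrix.mulVec_add, mv]
      funext i; fin_cases i <;> simp [castv, Matrix.vecHead, Matrix.vecTail] <;> ring
    rw [hre]
    exact h4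

end Dyn

end S16

/-- if `α > 1` and `β - 1 ≤ α ≤ β`, then `(A, 𝒟)` has the
finiteness property and the attractor (set of periodic points of `Φ`) is `{0}`. -/
theorem stmt16 (α β : ℚ) (hα : 1 < α) (hαβ1 : β - 1 ≤ α) (hαβ2 : α ≤ β)
    (hirr : Irreducible (X ^ 2 + C α * X + C β : ℚ[X]))
    (hexp : ∀ z : ℂ, z ^ 2 + (α : ℂ) * z + (β : ℂ) = 0 → 1 < ‖z‖)
    (c a b : ℤ) (hc : 0 < c)
    (ha : (a : ℚ) = (c : ℚ) * α) (hb : (b : ℚ) = (c : ℚ) * β)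
    (hprim : Int.gcd c (Int.gcd a b) = 1)
    (A : Matrix (Fin 2) (Fin 2) ℚ) (hA : A = !![0, -β; 1, -α])
    (Φ : (Fin 2 → ℚ) → Fin 2 → ℚ)
    (hΦmem : ∀ x ∈ intSpan A, Φ x ∈ intSpan A)
    (hΦ : ∀ x ∈ intSpan A, ∃ ν : ℤ, 0 ≤ ν ∧ ν ≤ |b| - 1 ∧
      x = digitVec ν + A.mulVec (Φ x))
     :
    (∀ x ∈ intSpan A, ∃ k : ℕ, Φ^[k] x = 0) ∧
    {x | x ∈ intSpan A ∧ ∃ r : ℕ, 1 ≤ r ∧ Φ^[r] x = x} = {0} := by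
  have part1 : ∀ x ∈ intSpan A, ∃ k : ℕ, Φ^[k] x = 0 :=
    S16.gen A α β c a b Φ hα hαβ2 hc ha hb hprim hA hΦmem hΦ
  refine ⟨part1, ?_⟩
  ext x
  simp only [Set.mem_setOf_eq, Set.mem_singleton_iff]
  constructor
  · rintro ⟨hx, r, hr1, hrx⟩
    obtain ⟨k, hk⟩ := part1 x hx
    have hper : ∀ n : ℕ, Φ^[n * r] x = x := by
      intro n
      induction n with
      | zero => simp
      | succ n ihn => rw [Nat.succ_mul, Function.iterate_add_apply, hrx, ihn]
    have h1 : Φ^[k * r] x = Φ^[k * r - k] (Φ^[k] x) := by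
      rw [← Function.iterate_add_apply]
      congr 1
      have : k ≤ k * r := Nat.le_mul_of_pos_right k (by omega)
      omega
    rw [hper k, hk] at h1
    rw [h1]
    exact S16.iter_phi_zero A α β c a b Φ hα hαβ2 hc ha hb hprim hA hΦmem hΦ (k * r - k)
  · intro hx0
    subst hx0
    refine ⟨S16.mem_zero A, 1, le_rfl, ?_⟩
    rw [Function.iterate_one]
    exact S16.phi_zero A α β c a b Φ hα hαβ2 hc ha hb hprim hA hΦmem hΦ

end
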